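/- (Lemma 4.3.) Let b > 0 and H(x) = diag(1/2 + g(x), 1/2 - g(x)) with g : [0,b] → ℝ integrable, |g| ≤ 1/2 a.e. Suppose there exist [a,c] ⊂ (0,b] and δ > 0 such that g restricted to [a,c] is absolutely continuous with integrable derivative and |g(x)| ≤ 1/2 - δ on [a,c]. Then there exists C₁ > 0, independent of the spectral parameter, such that for every λ ∈ ℝ, (∫₀^b u(λ,x)ᵀ H(x) u(λ,x) dx)^{1/2} ≥ C₁·‖u(λ,a)‖, where ‖·‖ is the Euclidean norm on ℝ². -/

import Mathlib

open MeasureTheory Matrix Set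

noncomputable section

/-- The symplectic matrix 𝒥 = [[0,-1],[1,0]] over ℝ. -/
def J2 : Matrix (Fin 2) (Fin 2) ℝ := !![0, -1; 1, 0]

/-- The symplectic matrix 𝒥 = [[0,-1],[1,0]] over ℂ. -/
def J2C : Matrix (Fin 2) (Fin 2) ℂ := !![0, -1; 1, 0]

/-- Complexification of a real 2×2 matrix. -/
def cmat (M : Matrix (Fin 2) (Fin 2) ℝ) : Matrix (Fin 2) (Fin 2) ℂ :=
  M.map Complex.ofReal


lemma parts_core {a x : ℝ} (hax : a ≤ x) {f g : ℝ → ℝ}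
    (hf : IntegrableOn f (Ioc a x)) (hg : IntegrableOn g (Ioc a x)) :
    (∫ t in Ioc a x, f t) * (∫ t in Ioc a x, g t)
      = (∫ s in Ioc a x, (∫ t in Ioc a s, f t) * g s)
        + ∫ s in Ioc a x, f s * (∫ t in Ioc a s, g t) := by
  set μ := volume.restrict (Ioc a x) with hμ
  have hT : MeasurableSet {p : ℝ × ℝ | p.1 ≤ p.2} :=
    measurableSet_le measurable_fst measurable_snd
  have hprod : Integrable (fun z : ℝ × ℝ => f z.1 * g z.2) (μ.prod μ) :=
    hf.mul_prod hg
  have h1 : Integrable ({p : ℝ × ℝ | p.1 ≤ p.2}.indicator fun z => f z.1 * g z.2) (μ.prod μ) :=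
    hprod.indicator hT
  have h2 : Integrable ({p : ℝ × ℝ | p.1 ≤ p.2}ᶜ.indicator fun z => f z.1 * g z.2) (μ.prod μ) :=
    hprod.indicator hT.compl
  have hsplit : (∫ t in Ioc a x, f t) * (∫ t in Ioc a x, g t)
      = (∫ z, ({p : ℝ × ℝ | p.1 ≤ p.2}.indicator fun z => f z.1 * g z.2) z ∂μ.prod μ)
        + ∫ z, ({p : ℝ × ℝ | p.1 ≤ p.2}ᶜ.indicator fun z => f z.1 * g z.2) z ∂μ.prod μ := by
    rw [← integral_add h1 h2]
    rw [← integral_prod_mul f g]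
    congr 1
    ext z
    simp [Set.indicator_apply]
    by_cases hz : z.1 ≤ z.2
    · simp [hz, not_lt.2 hz]
    · simp [hz, lt_of_not_ge hz]
  rw [hsplit]
  congr 1
  · rw [integral_prod_symm _ h1]
    refine integral_congr_ae ?_
    filter_upwards [ae_restrict_mem measurableSet_Ioc] with s hs
    have : ∀ t, ({p : ℝ × ℝ | p.1 ≤ p.2}.indicator (fun z => f z.1 * g z.2)) (t, s)
        = (Iic s).indicator (fun t => f t * g s) t := by
      intro t
      by_cases ht : t ≤ s <;> simp [Set.indicator_apply, ht]
    simp_rw [this]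
    rw [integral_indicator measurableSet_Iic, hμ, Measure.restrict_restrict measurableSet_Iic]
    have : Iic s ∩ Ioc a x = Ioc a s := by
      ext t
      simp only [mem_inter_iff, mem_Iic, mem_Ioc]
      constructor
      · rintro ⟨h1, h2, h3⟩; exact ⟨h2, h1⟩
      · rintro ⟨h1, h2⟩; exact ⟨h2, h1, h2.trans hs.2⟩
    rw [this, integral_mul_const]
  · rw [integral_prod _ h2]
    refine integral_congr_ae ?_
    filter_upwards [ae_restrict_mem measurableSet_Ioc] with t ht
    have : ∀ s, ({p : ℝ × ℝ | p.1 ≤ p.2}ᶜ.indicator (fun z => f z.1 * g z.2)) (t, s)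
        = (Iio t).indicator (fun s => f t * g s) s := by
      intro s
      by_cases hs : s < t
      · simp [Set.indicator_apply, hs, not_le.2 hs]
      · simp [Set.indicator_apply, hs, not_lt.1 hs]
    simp_rw [this]
    rw [integral_indicator measurableSet_Iio, hμ, Measure.restrict_restrict measurableSet_Iio]
    have : Iio t ∩ Ioc a x = Ioo a t := by
      ext s
      simp only [mem_inter_iff, mem_Iio, mem_Ioc, mem_Ioo]
      constructor
      · rintro ⟨h1, h2, h3⟩; exact ⟨h2, h1⟩
      · rintro ⟨h1, h2⟩; exact ⟨h2, h1, (h2.le.trans ht.2)⟩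
    rw [this, integral_const_mul, ← integral_Ioc_eq_integral_Ioo]

lemma parts {a x : ℝ} (hax : a ≤ x) {f g : ℝ → ℝ}
    (hf : IntegrableOn f (Icc a x)) (hg : IntegrableOn g (Icc a x)) (C D : ℝ) :
    (C + ∫ t in a..x, f t) * (D + ∫ t in a..x, g t)
      = C * D + ∫ s in a..x, ((C + ∫ t in a..s, f t) * g s
          + f s * (D + ∫ t in a..s, g t)) := by
  set F : ℝ → ℝ := fun s => ∫ t in Ioc a s, f t with hF
  set G : ℝ → ℝ := fun s => ∫ t in Ioc a s, g t with hG
  have hFc : ContinuousOn F (Icc a x) := intervalIntegral.continuousOn_primitive hf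
  have hGc : ContinuousOn G (Icc a x) := intervalIntegral.continuousOn_primitive hg
  have hfI : IntegrableOn f (Ioc a x) := hf.mono_set Ioc_subset_Icc_self
  have hgI : IntegrableOn g (Ioc a x) := hg.mono_set Ioc_subset_Icc_self
  have hFg : IntegrableOn (fun s => F s * g s) (Ioc a x) :=
    (IntegrableOn.continuousOn_mul hFc hg isCompact_Icc).mono_set Ioc_subset_Icc_self
  have hfG : IntegrableOn (fun s => f s * G s) (Ioc a x) :=
    (IntegrableOn.mul_continuousOn hf hGc isCompact_Icc).mono_set Ioc_subset_Icc_self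
  have e1 : IntegrableOn (fun s => C * g s + F s * g s) (Ioc a x) := (hgI.const_mul C).add hFg
  have e2 : IntegrableOn (fun s => f s * D + f s * G s) (Ioc a x) := (hfI.mul_const D).add hfG
  have hcongr : ∫ s in a..x, ((C + ∫ t in a..s, f t) * g s
          + f s * (D + ∫ t in a..s, g t))
      = ∫ s in Ioc a x, ((C * g s + F s * g s) + (f s * D + f s * G s)) := by
    rw [intervalIntegral.integral_of_le hax]
    refine setIntegral_congr_fun measurableSet_Ioc ?_
    intro s hs
    simp only [intervalIntegral.integral_of_le hs.1.le]
    ring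
  have hsplit : ∫ s in Ioc a x, ((C * g s + F s * g s) + (f s * D + f s * G s))
      = (C * ∫ s in Ioc a x, g s) + (∫ s in Ioc a x, F s * g s)
        + ((∫ s in Ioc a x, f s) * D + ∫ s in Ioc a x, f s * G s) := by
    rw [integral_add e1 e2, integral_add (hgI.const_mul C) hFg,
      integral_add (hfI.mul_const D) hfG, integral_const_mul, integral_mul_const]
  have hpc : F x * G x = (∫ s in Ioc a x, F s * g s) + ∫ s in Ioc a x, f s * G s :=
    parts_core hax hfI hgI
  have hFx : (∫ t in a..x, f t) = F x := intervalIntegral.integral_of_le hax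
  have hGx : (∫ t in a..x, g t) = G x := intervalIntegral.integral_of_le hax
  rw [hcongr, hsplit, hFx, hGx]
  rw [show (C + F x) * (D + G x) = C * D + (C * G x + F x * G x + F x * D) from by ring, hpc]
  ring

set_option maxHeartbeats 1000000 in
/-- Lemma 4.3. If `g` is absolutely continuous on `[a,c] ⊂ (0,b]`
with `|g| ≤ 1/2 - δ` there, then there is `C₁ > 0`, independent of the spectral
parameter, such that `‖u(λ,·)‖_{L²_H(0,b)} ≥ C₁ ‖u(λ,a)‖` for every `λ ∈ ℝ`. -/
theorem norm_lower_bound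
    (b : ℝ) (hb : 0 < b)
    (g : ℝ → ℝ)
    (hgint : IntegrableOn g (Icc 0 b))
    (hgbd : ∀ᵐ x ∂volume, x ∈ Icc (0:ℝ) b → |g x| ≤ 1/2)
    (H : ℝ → Matrix (Fin 2) (Fin 2) ℝ)
    (hH : ∀ x, H x = !![1/2 + g x, 0; 0, 1/2 - g x])
    (a c δ : ℝ) (ha : 0 < a) (hac : a < c) (hcb : c ≤ b) (hδ : 0 < δ)
    (gd : ℝ → ℝ) (hgdint : IntegrableOn gd (Icc a c))
    (hgAC : ∀ x ∈ Icc a c, g x = g a + ∫ s in a..x, gd s)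
    (hgbd2 : ∀ x ∈ Icc a c, |g x| ≤ 1/2 - δ)
    (u : ℝ → ℝ → Fin 2 → ℝ)
    (hucont : ∀ lam, ContinuousOn (u lam) (Icc 0 b))
    (hueq : ∀ lam : ℝ, ∀ x ∈ Icc (0:ℝ) b,
      u lam x = ![1, 0] + lam • ∫ s in (0:ℝ)..x, (J2 * H s) *ᵥ u lam s) :
    ∃ C₁ > 0, ∀ lam : ℝ,
      C₁ * Real.sqrt ((u lam a 0)^2 + (u lam a 1)^2)
        ≤ Real.sqrt (∫ x in (0:ℝ)..b, u lam x ⬝ᵥ (H x *ᵥ u lam x)) := by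
  have hac' : a ≤ c := hac.le
  have hca : 0 < c - a := sub_pos.mpr hac
  have hab' : a ≤ b := hac'.trans hcb
  have hsub : Icc a c ⊆ Icc 0 b := Icc_subset_Icc ha.le hcb
  have hgdabs : IntegrableOn (fun t => |gd t|) (Icc a c) := hgdint.abs
  set K : ℝ := ∫ t in a..c, |gd t| with hKdef
  have hK0 : 0 ≤ K := intervalIntegral.integral_nonneg hac' (fun t _ => abs_nonneg _)
  set N : ℕ := ⌈4 * K / δ⌉₊ with hNdef
  set η : ℝ := (2/3 : ℝ) ^ (N + 1) with hηdef
  have hη : 0 < η := by positivity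
  have hKN : K ≤ ((N:ℝ) + 1) * (δ / 4) := by
    have h1 : 4 * K / δ ≤ (N : ℝ) := Nat.le_ceil _
    have h2 := (div_le_iff₀ hδ).1 h1
    nlinarith
  refine ⟨Real.sqrt ((c - a) * η * δ), Real.sqrt_pos.mpr (by positivity), ?_⟩
  intro lam
  set f1 : ℝ → ℝ := fun x => u lam x 0 with hf1def
  set f2 : ℝ → ℝ := fun x => u lam x 1 with hf2def
  have hf1c : ContinuousOn f1 (Icc 0 b) :=
    (continuous_apply (0 : Fin 2)).comp_continuousOn (hucont lam)
  have hf2c : ContinuousOn f2 (Icc 0 b) :=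
    (continuous_apply (1 : Fin 2)).comp_continuousOn (hucont lam)
  have hμfin : volume (Icc (0:ℝ) b) < ⊤ := measure_Icc_lt_top
  have hconst : ∀ C : ℝ, IntegrableOn (fun _ => C) (Icc (0:ℝ) b) :=
    fun C => (integrableOn_const_iff).mpr (Or.inr hμfin)
  have hh1int : IntegrableOn (fun s => 1/2 + g s) (Icc 0 b) := (hconst (1/2)).add hgint
  have hh2int : IntegrableOn (fun s => -(1/2 - g s)) (Icc 0 b) := ((hconst (1/2)).sub hgint).neg
  set w0 : ℝ → ℝ := fun s => -(1/2 - g s) * f2 s with hw0def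
  set w1 : ℝ → ℝ := fun s => (1/2 + g s) * f1 s with hw1def
  have hw0int : IntegrableOn w0 (Icc 0 b) := hh2int.mul_continuousOn hf2c isCompact_Icc
  have hw1int : IntegrableOn w1 (Icc 0 b) := hh1int.mul_continuousOn hf1c isCompact_Icc
  have hIIw0 : ∀ x ∈ Icc (0:ℝ) b, ∀ y ∈ Icc (0:ℝ) b, IntervalIntegrable w0 volume x y :=
    fun x hx y hy => (hw0int.mono_set (uIcc_subset_Icc hx hy)).intervalIntegrable
  have hIIw1 : ∀ x ∈ Icc (0:ℝ) b, ∀ y ∈ Icc (0:ℝ) b, IntervalIntegrable w1 volume x y :=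
    fun x hx y hy => (hw1int.mono_set (uIcc_subset_Icc hx hy)).intervalIntegrable
  have hIIsmul : ∀ {f : ℝ → ℝ} {x y : ℝ}, IntervalIntegrable f volume x y →
      ∀ v : Fin 2 → ℝ, IntervalIntegrable (fun s => f s • v) volume x y :=
    fun h v => ⟨h.1.smul_const v, h.2.smul_const v⟩
  have h0I : (0:ℝ) ∈ Icc (0:ℝ) b := left_mem_Icc.mpr hb.le
  have habI : a ∈ Icc (0:ℝ) b := ⟨ha.le, hab'⟩
  have hcbI : c ∈ Icc (0:ℝ) b := ⟨(ha.trans hac).le, hcb⟩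
  have hbbI : b ∈ Icc (0:ℝ) b := right_mem_Icc.mpr hb.le
  have hvec : ∀ s, (J2 * H s) *ᵥ u lam s
      = w0 s • ![(1:ℝ), 0] + w1 s • ![(0:ℝ), 1] := by
    intro s
    funext i
    rw [hH]
    fin_cases i <;>
      simp [J2, Matrix.mulVec, Matrix.mul_apply, Fin.sum_univ_two, dotProduct,
        hw0def, hw1def, hf1def, hf2def] <;> ring
  have hcomp : ∀ x ∈ Icc (0:ℝ) b,
      f1 x = 1 + lam * ∫ s in (0:ℝ)..x, w0 s ∧ f2 x = lam * ∫ s in (0:ℝ)..x, w1 s := by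
    intro x hx
    have h0 := hueq lam x hx
    have hint : (∫ s in (0:ℝ)..x, (J2 * H s) *ᵥ u lam s)
        = (∫ s in (0:ℝ)..x, w0 s) • ![(1:ℝ), 0] + (∫ s in (0:ℝ)..x, w1 s) • ![(0:ℝ), 1] := by
      rw [intervalIntegral.integral_congr (g := fun s => w0 s • ![(1:ℝ), 0] + w1 s • ![(0:ℝ), 1])
        (fun s _ => hvec s)]
      rw [intervalIntegral.integral_add (hIIsmul (hIIw0 0 h0I x hx) _) (hIIsmul (hIIw1 0 h0I x hx) _),
        intervalIntegral.integral_smul_const, intervalIntegral.integral_smul_const]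
    rw [hint] at h0
    constructor
    · have := congrFun h0 0
      simpa [hf1def] using this
    · have := congrFun h0 1
      simpa [hf2def] using this
  set v1 : ℝ → ℝ := fun s => lam * w0 s with hv1def
  set v2 : ℝ → ℝ := fun s => lam * w1 s with hv2def
  have hv1int : IntegrableOn v1 (Icc a c) := (hw0int.mono_set hsub).const_mul lam
  have hv2int : IntegrableOn v2 (Icc a c) := (hw1int.mono_set hsub).const_mul lam
  have hf1eq : ∀ x ∈ Icc a c, f1 x = f1 a + ∫ s in a..x, v1 s := by
    intro x hx
    have hxb : x ∈ Icc 0 b := hsub hx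
    have e1 := (hcomp x hxb).1
    have e2 := (hcomp a habI).1
    have e3 : (∫ s in (0:ℝ)..x, w0 s) - ∫ s in (0:ℝ)..a, w0 s = ∫ s in a..x, w0 s :=
      intervalIntegral.integral_interval_sub_left (hIIw0 0 h0I x hxb) (hIIw0 0 h0I a habI)
    have e4 : (∫ s in a..x, v1 s) = lam * ∫ s in a..x, w0 s :=
      intervalIntegral.integral_const_mul lam w0
    rw [e4, ← e3, e1, e2]
    ring
  have hf2eq : ∀ x ∈ Icc a c, f2 x = f2 a + ∫ s in a..x, v2 s := by
    intro x hx
    have hxb : x ∈ Icc 0 b := hsub hx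
    have e1 := (hcomp x hxb).2
    have e2 := (hcomp a habI).2
    have e3 : (∫ s in (0:ℝ)..x, w1 s) - ∫ s in (0:ℝ)..a, w1 s = ∫ s in a..x, w1 s :=
      intervalIntegral.integral_interval_sub_left (hIIw1 0 h0I x hxb) (hIIw1 0 h0I a habI)
    have e4 : (∫ s in a..x, v2 s) = lam * ∫ s in a..x, w1 s :=
      intervalIntegral.integral_const_mul lam w1
    rw [e4, ← e3, e1, e2]
    ring
  set E : ℝ → ℝ := fun x => (1/2 + g x) * f1 x ^ 2 + (1/2 - g x) * f2 x ^ 2 with hEdef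
  have hq1int : IntegrableOn (fun s => f1 s * v1 s + v1 s * f1 s) (Icc a c) :=
    (IntegrableOn.continuousOn_mul (hf1c.mono hsub) hv1int isCompact_Icc).add
      (hv1int.mul_continuousOn (hf1c.mono hsub) isCompact_Icc)
  have hq2int : IntegrableOn (fun s => f2 s * v2 s + v2 s * f2 s) (Icc a c) :=
    (IntegrableOn.continuousOn_mul (hf2c.mono hsub) hv2int isCompact_Icc).add
      (hv2int.mul_continuousOn (hf2c.mono hsub) isCompact_Icc)
  have hsq1 : ∀ y ∈ Icc a c, f1 y ^ 2 = f1 a ^ 2 + ∫ s in a..y, (f1 s * v1 s + v1 s * f1 s) := by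
    intro y hy
    have h := parts hy.1 (hv1int.mono_set (Icc_subset_Icc le_rfl hy.2))
      (hv1int.mono_set (Icc_subset_Icc le_rfl hy.2)) (f1 a) (f1 a)
    rw [← hf1eq y hy] at h
    have hcong : (∫ s in a..y, ((f1 a + ∫ t in a..s, v1 t) * v1 s
          + v1 s * (f1 a + ∫ t in a..s, v1 t)))
        = ∫ s in a..y, (f1 s * v1 s + v1 s * f1 s) := by
      apply intervalIntegral.integral_congr
      intro s hs
      rw [uIcc_of_le hy.1] at hs
      have hs' : s ∈ Icc a c := ⟨hs.1, hs.2.trans hy.2⟩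
      dsimp only
      rw [← hf1eq s hs']
    rw [sq, sq, h, hcong]
  have hsq2 : ∀ y ∈ Icc a c, f2 y ^ 2 = f2 a ^ 2 + ∫ s in a..y, (f2 s * v2 s + v2 s * f2 s) := by
    intro y hy
    have h := parts hy.1 (hv2int.mono_set (Icc_subset_Icc le_rfl hy.2))
      (hv2int.mono_set (Icc_subset_Icc le_rfl hy.2)) (f2 a) (f2 a)
    rw [← hf2eq y hy] at h
    have hcong : (∫ s in a..y, ((f2 a + ∫ t in a..s, v2 t) * v2 s
          + v2 s * (f2 a + ∫ t in a..s, v2 t)))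
        = ∫ s in a..y, (f2 s * v2 s + v2 s * f2 s) := by
      apply intervalIntegral.integral_congr
      intro s hs
      rw [uIcc_of_le hy.1] at hs
      have hs' : s ∈ Icc a c := ⟨hs.1, hs.2.trans hy.2⟩
      dsimp only
      rw [← hf2eq s hs']
    rw [sq, sq, h, hcong]
  have hE1 : ∀ x ∈ Icc a c, (1/2 + g x) * f1 x ^ 2 = (1/2 + g a) * f1 a ^ 2
      + ∫ s in a..x, ((1/2 + g s) * (f1 s * v1 s + v1 s * f1 s) + gd s * f1 s ^ 2) := by
    intro x hx
    have h := parts hx.1 (hgdint.mono_set (Icc_subset_Icc le_rfl hx.2))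
      (hq1int.mono_set (Icc_subset_Icc le_rfl hx.2)) (1/2 + g a) (f1 a ^ 2)
    have hgx : 1/2 + g a + ∫ t in a..x, gd t = 1/2 + g x := by rw [hgAC x hx]; ring
    have hfx : f1 a ^ 2 + ∫ s in a..x, (f1 s * v1 s + v1 s * f1 s) = f1 x ^ 2 := (hsq1 x hx).symm
    rw [hgx, hfx] at h
    rw [h]
    congr 1
    apply intervalIntegral.integral_congr
    intro s hs
    rw [uIcc_of_le hx.1] at hs
    have hs' : s ∈ Icc a c := ⟨hs.1, hs.2.trans hx.2⟩
    have hgs : 1/2 + g a + ∫ t in a..s, gd t = 1/2 + g s := by rw [hgAC s hs']; ring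
    have hfs : f1 a ^ 2 + ∫ t in a..s, (f1 t * v1 t + v1 t * f1 t) = f1 s ^ 2 := (hsq1 s hs').symm
    dsimp only
    rw [hgs, hfs]
  have hE2 : ∀ x ∈ Icc a c, (1/2 - g x) * f2 x ^ 2 = (1/2 - g a) * f2 a ^ 2
      + ∫ s in a..x, ((1/2 - g s) * (f2 s * v2 s + v2 s * f2 s) + (-gd s) * f2 s ^ 2) := by
    intro x hx
    have hgdneg : IntegrableOn (fun t => -gd t) (Icc a x) :=
      (hgdint.mono_set (Icc_subset_Icc le_rfl hx.2)).neg
    have h := parts hx.1 hgdneg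
      (hq2int.mono_set (Icc_subset_Icc le_rfl hx.2)) (1/2 - g a) (f2 a ^ 2)
    have hgx : 1/2 - g a + ∫ t in a..x, -gd t = 1/2 - g x := by
      rw [intervalIntegral.integral_neg, hgAC x hx]; ring
    have hfx : f2 a ^ 2 + ∫ s in a..x, (f2 s * v2 s + v2 s * f2 s) = f2 x ^ 2 := (hsq2 x hx).symm
    rw [hgx, hfx] at h
    rw [h]
    congr 1
    apply intervalIntegral.integral_congr
    intro s hs
    rw [uIcc_of_le hx.1] at hs
    have hs' : s ∈ Icc a c := ⟨hs.1, hs.2.trans hx.2⟩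
    have hgs : 1/2 - g a + ∫ t in a..s, -gd t = 1/2 - g s := by
      rw [intervalIntegral.integral_neg, hgAC s hs']; ring
    have hfs : f2 a ^ 2 + ∫ t in a..s, (f2 t * v2 t + v2 t * f2 t) = f2 s ^ 2 := (hsq2 s hs').symm
    dsimp only
    rw [hgs, hfs]
  set ρ : ℝ → ℝ := fun s => gd s * (f1 s ^ 2 - f2 s ^ 2) with hρdef
  have hρint : IntegrableOn ρ (Icc a c) :=
    hgdint.mul_continuousOn (((hf1c.mono hsub).pow 2).sub ((hf2c.mono hsub).pow 2)) isCompact_Icc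
  have hgmes : AEStronglyMeasurable (fun s => g s) (volume.restrict (Icc a c)) :=
    (hgint.mono_set hsub).aestronglyMeasurable
  have hgbd2' : ∀ᵐ s ∂(volume.restrict (Icc a c)), ‖(1:ℝ)/2 + g s‖ ≤ 1 := by
    refine (ae_restrict_iff' measurableSet_Icc).mpr (ae_of_all _ fun s hs => ?_)
    have := abs_le.mp (hgbd2 s hs)
    rw [Real.norm_eq_abs, abs_le]
    constructor <;> linarith
  have hgbd2'' : ∀ᵐ s ∂(volume.restrict (Icc a c)), ‖(1:ℝ)/2 - g s‖ ≤ 1 := by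
    refine (ae_restrict_iff' measurableSet_Icc).mpr (ae_of_all _ fun s hs => ?_)
    have := abs_le.mp (hgbd2 s hs)
    rw [Real.norm_eq_abs, abs_le]
    constructor <;> linarith
  have hAint : IntegrableOn
      (fun s => (1/2 + g s) * (f1 s * v1 s + v1 s * f1 s) + gd s * f1 s ^ 2) (Icc a c) := by
    apply Integrable.add
    · exact Integrable.bdd_mul hq1int (aestronglyMeasurable_const.add hgmes) hgbd2'
    · exact hgdint.mul_continuousOn ((hf1c.mono hsub).pow 2) isCompact_Icc
  have hBint : IntegrableOn
      (fun s => (1/2 - g s) * (f2 s * v2 s + v2 s * f2 s) + (-gd s) * f2 s ^ 2) (Icc a c) := by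
    apply Integrable.add
    · exact Integrable.bdd_mul hq2int (aestronglyMeasurable_const.sub hgmes) hgbd2''
    · exact IntegrableOn.mul_continuousOn hgdint.neg ((hf2c.mono hsub).pow 2) isCompact_Icc
  have hEeq : ∀ x ∈ Icc a c, E x = E a + ∫ s in a..x, ρ s := by
    intro x hx
    have h1 := hE1 x hx
    have h2 := hE2 x hx
    have hsum : (∫ s in a..x, ((1/2 + g s) * (f1 s * v1 s + v1 s * f1 s) + gd s * f1 s ^ 2))
        + ∫ s in a..x, ((1/2 - g s) * (f2 s * v2 s + v2 s * f2 s) + (-gd s) * f2 s ^ 2)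
        = ∫ s in a..x, ρ s := by
      rw [← intervalIntegral.integral_add
        ((hAint.mono_set (uIcc_subset_Icc (left_mem_Icc.mpr hac') hx)).intervalIntegrable)
        ((hBint.mono_set (uIcc_subset_Icc (left_mem_Icc.mpr hac') hx)).intervalIntegrable)]
      apply intervalIntegral.integral_congr
      intro s hs
      dsimp only
      simp only [hρdef, hv1def, hv2def, hw0def, hw1def]
      ring
    simp only [hEdef]
    rw [h1, h2]
    linarith [hsum]
  have hIIof : ∀ {φ : ℝ → ℝ}, IntegrableOn φ (Icc a c) →
      ∀ {p q : ℝ}, p ∈ Icc a c → q ∈ Icc a c → IntervalIntegrable φ volume p q :=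
    fun h _ _ hp hq => (h.mono_set (uIcc_subset_Icc hp hq)).intervalIntegrable
  have haI : a ∈ Icc a c := left_mem_Icc.mpr hac'
  have hcI : c ∈ Icc a c := right_mem_Icc.mpr hac'
  have hEcont : ContinuousOn E (Icc a c) := by
    apply ContinuousOn.congr (continuousOn_const.add (intervalIntegral.continuousOn_primitive hρint))
    intro x hx
    rw [hEeq x hx]
    simp only [Pi.add_apply]
    rw [intervalIntegral.integral_of_le hx.1]
  have hδ1 : ∀ x ∈ Icc a c, δ ≤ 1/2 + g x ∧ δ ≤ 1/2 - g x := by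
    intro x hx
    have h := abs_le.mp (hgbd2 x hx)
    constructor <;> linarith [h.1, h.2]
  have hE0 : ∀ x ∈ Icc a c, 0 ≤ E x := by
    intro x hx
    have h := hδ1 x hx
    simp only [hEdef]
    nlinarith [sq_nonneg (f1 x), sq_nonneg (f2 x), hδ]
  have hEδ : δ * (f1 a ^ 2 + f2 a ^ 2) ≤ E a := by
    have h := hδ1 a haI
    simp only [hEdef]
    nlinarith [sq_nonneg (f1 a), sq_nonneg (f2 a)]
  have hρbd : ∀ s ∈ Icc a c, ∀ M : ℝ, E s ≤ M → |ρ s| ≤ |gd s| * (M / δ) := by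
    intro s hs M hM
    have h := hδ1 s hs
    have h1 : |ρ s| ≤ |gd s| * (f1 s ^ 2 + f2 s ^ 2) := by
      simp only [hρdef]
      rw [abs_mul]
      refine mul_le_mul_of_nonneg_left ?_ (abs_nonneg _)
      rw [abs_le]
      constructor <;> linarith [sq_nonneg (f1 s), sq_nonneg (f2 s)]
    have h2 : f1 s ^ 2 + f2 s ^ 2 ≤ M / δ := by
      rw [le_div_iff₀ hδ]
      have hEs : δ * (f1 s ^ 2 + f2 s ^ 2) ≤ E s := by
        simp only [hEdef]
        nlinarith [sq_nonneg (f1 s), sq_nonneg (f2 s)]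
      linarith
    exact h1.trans (mul_le_mul_of_nonneg_left h2 (abs_nonneg _))
  have step : ∀ p ∈ Icc a c, ∀ q ∈ Icc a c, p ≤ q → (∫ t in p..q, |gd t|) ≤ δ/4 →
      ∀ z ∈ Icc p q, 2/3 * E p ≤ E z := by
    intro p hp q hq hpq hsm
    have hpq_sub : Icc p q ⊆ Icc a c := Icc_subset_Icc hp.1 hq.2
    obtain ⟨m, hm, hmax⟩ := isCompact_Icc.exists_isMaxOn (nonempty_Icc.mpr hpq)
      (hEcont.mono hpq_sub)
    have hM0 : 0 ≤ E m := hE0 m (hpq_sub hm)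
    have key : ∀ z ∈ Icc p q, |E z - E p| ≤ E m / 4 := by
      intro z hz
      have hzac := hpq_sub hz
      have hdiff : E z - E p = ∫ s in p..z, ρ s := by
        rw [hEeq z hzac, hEeq p hp]
        have h := intervalIntegral.integral_interval_sub_left
          (hIIof hρint haI hzac) (hIIof hρint haI hp)
        linarith
      rw [hdiff]
      have h1 : |∫ s in p..z, ρ s| ≤ ∫ s in p..z, |ρ s| :=
        intervalIntegral.abs_integral_le_integral_abs hz.1
      have h2 : (∫ s in p..z, |ρ s|) ≤ ∫ s in p..z, |gd s| * (E m / δ) := by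
        apply intervalIntegral.integral_mono_on hz.1
          (hIIof hρint.abs hp hzac) ((hIIof hgdabs hp hzac).mul_const _)
        intro t ht
        have htq : t ∈ Icc p q := ⟨ht.1, ht.2.trans hz.2⟩
        exact hρbd t (hpq_sub htq) (E m) (hmax htq)
      have h3 : (∫ s in p..z, |gd s| * (E m / δ)) = (∫ s in p..z, |gd s|) * (E m / δ) :=
        intervalIntegral.integral_mul_const _ _
      have h4 : (∫ s in p..z, |gd s|) ≤ δ/4 := by
        have hadd : (∫ s in p..z, |gd s|) + ∫ s in z..q, |gd s| = ∫ s in p..q, |gd s| :=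
          intervalIntegral.integral_add_adjacent_intervals
            (hIIof hgdabs hp hzac) (hIIof hgdabs hzac hq)
        have h5 : 0 ≤ ∫ s in z..q, |gd s| :=
          intervalIntegral.integral_nonneg hz.2 (fun t _ => abs_nonneg _)
        linarith
      have h6 : (∫ s in p..z, |gd s|) * (E m / δ) ≤ (δ/4) * (E m / δ) :=
        mul_le_mul_of_nonneg_right h4 (by positivity)
      have h7 : (δ/4) * (E m / δ) = E m / 4 := by field_simp
      linarith
    intro z hz
    have hkm := key m hm
    have hpm : E p ≤ E m := hmax (left_mem_Icc.mpr hpq)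
    have hkz := key z hz
    have h8 := abs_le.mp hkm
    have h9 := abs_le.mp hkz
    linarith
  set r : ℝ → ℝ := fun x => ∫ t in a..x, |gd t| with hrdef
  have hrcont : ContinuousOn r (Icc a c) := by
    apply ContinuousOn.congr (intervalIntegral.continuousOn_primitive hgdabs)
    intro x hx
    simp only [hrdef]
    rw [intervalIntegral.integral_of_le hx.1]
  have hrsub : ∀ p ∈ Icc a c, ∀ q ∈ Icc a c, r q - r p = ∫ t in p..q, |gd t| := by
    intro p hp q hq
    exact intervalIntegral.integral_interval_sub_left (hIIof hgdabs haI hq) (hIIof hgdabs haI hp)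
  have hra : r a = 0 := intervalIntegral.integral_same
  have ind : ∀ n : ℕ, ∀ x ∈ Icc a c, r x ≤ ((n:ℝ)+1) * (δ/4) → (2/3:ℝ)^(n+1) * E a ≤ E x := by
    intro n
    induction n with
    | zero =>
      intro x hx hr
      have hr' : (∫ t in a..x, |gd t|) ≤ δ/4 := by
        have : r x = ∫ t in a..x, |gd t| := rfl
        rw [← this]
        calc r x ≤ ((0:ℝ)+1) * (δ/4) := by exact_mod_cast hr
          _ = δ/4 := by ring
      have := step a haI x hx hx.1 hr' x (right_mem_Icc.mpr hx.1)
      calc (2/3:ℝ)^(0+1) * E a = 2/3 * E a := by norm_num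
        _ ≤ E x := this
    | succ n IH =>
      intro x hx hr
      rcases le_or_gt (r x) (((n:ℝ)+1) * (δ/4)) with hcase | hcase
      · have h1 := IH x hx hcase
        have h2 : (2/3:ℝ)^(n+1+1) ≤ (2/3:ℝ)^(n+1) :=
          pow_le_pow_of_le_one (by norm_num) (by norm_num) (by omega)
        exact le_trans (mul_le_mul_of_nonneg_right h2 (hE0 a haI)) h1
      · have hmem : ((n:ℝ)+1) * (δ/4) ∈ Icc (r a) (r x) := by
          constructor
          · rw [hra]; positivity
          · exact hcase.le
        obtain ⟨y, hy, hry⟩ := intermediate_value_Icc hx.1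
          (hrcont.mono (Icc_subset_Icc le_rfl hx.2)) hmem
        have hyac : y ∈ Icc a c := ⟨hy.1, hy.2.trans hx.2⟩
        have hEy := IH y hyac (le_of_eq hry)
        have hsm : (∫ t in y..x, |gd t|) ≤ δ/4 := by
          have hdiff := hrsub y hyac x hx
          push_cast at hr
          rw [← hdiff, hry]
          linarith
        have hst := step y hyac x hx hy.2 hsm x (right_mem_Icc.mpr hy.2)
        calc (2/3:ℝ)^(n+1+1) * E a = (2/3) * ((2/3:ℝ)^(n+1) * E a) := by ring
          _ ≤ (2/3) * E y := mul_le_mul_of_nonneg_left hEy (by norm_num)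
          _ ≤ E x := hst
  have hElb : ∀ x ∈ Icc a c, η * E a ≤ E x := by
    intro x hx
    apply ind N x hx
    have h1 : r x ≤ K := by
      have hdiff := hrsub x hx c hcI
      have h2 : 0 ≤ ∫ t in x..c, |gd t| :=
        intervalIntegral.integral_nonneg hx.2 (fun t _ => abs_nonneg _)
      have hrc : r c = K := by rw [hrdef, hKdef]
      linarith
    linarith [hKN]
  -- final assembly
  have hWE : ∀ x, u lam x ⬝ᵥ (H x *ᵥ u lam x) = E x := by
    intro x
    rw [hH]
    simp [dotProduct, Matrix.mulVec, Fin.sum_univ_two, hEdef, hf1def, hf2def]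
    ring
  have hEintb : IntegrableOn E (Icc 0 b) := by
    have h1 : IntegrableOn (fun x => (1/2 + g x) * f1 x ^ 2) (Icc 0 b) :=
      hh1int.mul_continuousOn (hf1c.pow 2) isCompact_Icc
    have hh2int' : IntegrableOn (fun s => 1/2 - g s) (Icc 0 b) := (hconst (1/2)).sub hgint
    have h2 : IntegrableOn (fun x => (1/2 - g x) * f2 x ^ 2) (Icc 0 b) :=
      hh2int'.mul_continuousOn (hf2c.pow 2) isCompact_Icc
    exact h1.add h2
  have hIIEb : ∀ p q : ℝ, p ∈ Icc (0:ℝ) b → q ∈ Icc (0:ℝ) b → IntervalIntegrable E volume p q :=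
    fun p q hp hq => (hEintb.mono_set (uIcc_subset_Icc hp hq)).intervalIntegrable
  have hsplit1 : ∫ x in (0:ℝ)..b, E x
      = (∫ x in (0:ℝ)..a, E x) + ((∫ x in a..c, E x) + ∫ x in c..b, E x) := by
    rw [intervalIntegral.integral_add_adjacent_intervals (hIIEb a c habI hcbI)
      (hIIEb c b hcbI hbbI),
      intervalIntegral.integral_add_adjacent_intervals (hIIEb 0 a h0I habI)
      (hIIEb a b habI hbbI)]
  have hside : ∀ p q : ℝ, p ∈ Icc (0:ℝ) b → q ∈ Icc (0:ℝ) b → p ≤ q →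
      0 ≤ ∫ x in p..q, E x := by
    intro p q hp hq hpq
    apply intervalIntegral.integral_nonneg_of_ae_restrict hpq
    filter_upwards [ae_restrict_mem measurableSet_Icc, ae_restrict_of_ae hgbd] with x hx hgx
    have hxb : x ∈ Icc 0 b := ⟨hp.1.trans hx.1, hx.2.trans hq.2⟩
    have h := abs_le.mp (hgx hxb)
    simp only [hEdef, Pi.zero_apply]
    nlinarith [sq_nonneg (f1 x), sq_nonneg (f2 x)]
  have hmid : (c - a) * (η * E a) ≤ ∫ x in a..c, E x := by
    have h := intervalIntegral.integral_mono_on hac' intervalIntegrable_const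
      (hIIEb a c habI hcbI) hElb
    rwa [intervalIntegral.integral_const, smul_eq_mul] at h
  have htot : (c - a) * (η * E a) ≤ ∫ x in (0:ℝ)..b, E x := by
    rw [hsplit1]
    have hs1 := hside 0 a h0I habI ha.le
    have hs2 := hside c b hcbI hbbI hcb
    linarith
  have hfinal : ((c - a) * η * δ) * (f1 a ^ 2 + f2 a ^ 2) ≤ ∫ x in (0:ℝ)..b, E x := by
    have h1 : (c - a) * η * (δ * (f1 a ^ 2 + f2 a ^ 2)) ≤ (c - a) * η * E a :=
      mul_le_mul_of_nonneg_left hEδ (by positivity)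
    calc ((c - a) * η * δ) * (f1 a ^ 2 + f2 a ^ 2)
        = (c - a) * η * (δ * (f1 a ^ 2 + f2 a ^ 2)) := by ring
      _ ≤ (c - a) * η * E a := h1
      _ = (c - a) * (η * E a) := by ring
      _ ≤ _ := htot
  have hgoal1 : (∫ x in (0:ℝ)..b, u lam x ⬝ᵥ (H x *ᵥ u lam x)) = ∫ x in (0:ℝ)..b, E x :=
    intervalIntegral.integral_congr (fun x _ => hWE x)
  have hgoal2 : (u lam a 0)^2 + (u lam a 1)^2 = f1 a ^ 2 + f2 a ^ 2 := rfl
  rw [hgoal1, hgoal2, ← Real.sqrt_mul (by positivity)]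
  exact Real.sqrt_le_sqrt hfinal
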